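/- Let M be a ℂ-module and f : (ℂ \ {0,1}) × 2ℤ × 2ℤ → M a function satisfying: (i) f(x,p,q) - f(x,p,q') = f(x,p,q-2) - f(x,p,q'-2) and (ii) f(x,p,q) - f(x,p',q) = f(x,p-2,q) - f(x,p'-2,q) for all x and even p,p',q,q'. Then for all even p, q: 4·f(x,p,q) = pq·f(x,2,2) - p(q-2)·f(x,2,0) - q(p-2)·f(x,0,2) + (pq - 2p - 2q + 4)·f(x,0,0). -/

import Mathlib

private lemma aux_lin {M : Type*} [AddCommGroup M] [Module ℂ M]
    (g : ℤ → M)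
    (hg : ∀ q q' : ℤ, Even q → Even q' → g q - g q' = g (q - 2) - g (q' - 2)) :
    ∀ k : ℤ, g (2 * k) = g 0 + (k : ℂ) • (g 2 - g 0) := by
  intro k
  induction k using Int.induction_on with
  | zero => simp
  | succ k ih =>
    have h := hg (2 * ((k : ℤ) + 1)) 2 ⟨(k : ℤ) + 1, by ring⟩ ⟨1, by ring⟩
    have e1 : 2 * ((k : ℤ) + 1) - 2 = 2 * (k : ℤ) := by ring
    have e2 : (2 : ℤ) - 2 = 0 := by ring
    rw [e1, e2] at h
    have h3 : g (2 * ((k : ℤ) + 1)) = g (2 * (k : ℤ)) + (g 2 - g 0) := by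
      linear_combination (norm := abel) h
    rw [h3, ih]
    push_cast
    module
  | pred k ih =>
    have h := hg (2 * (-(k : ℤ))) 2 ⟨-(k : ℤ), by ring⟩ ⟨1, by ring⟩
    have e1 : 2 * (-(k : ℤ)) - 2 = 2 * (-(k : ℤ) - 1) := by ring
    have e2 : (2 : ℤ) - 2 = 0 := by ring
    rw [e1, e2] at h
    have h3 : g (2 * (-(k : ℤ) - 1)) = g (2 * (-(k : ℤ))) - (g 2 - g 0) := by
      linear_combination (norm := abel) -h
    rw [h3, ih]
    push_cast
    module

theorem transfer_expansion {M : Type*} [AddCommGroup M] [Module ℂ M]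
    (f : ℂ → ℤ → ℤ → M)
    (h1 : ∀ (x : ℂ) (p q q' : ℤ), Even p → Even q → Even q' →
      f x p q - f x p q' = f x p (q - 2) - f x p (q' - 2))
    (h2 : ∀ (x : ℂ) (p p' q : ℤ), Even p → Even p' → Even q →
      f x p q - f x p' q = f x (p - 2) q - f x (p' - 2) q) :
    ∀ (x : ℂ) (p q : ℤ), Even p → Even q →
      (4 : ℂ) • f x p q =
        ((p : ℂ) * q) • f x 2 2 - ((p : ℂ) * (q - 2)) • f x 2 0
          - ((q : ℂ) * (p - 2)) • f x 0 2
          + ((p : ℂ) * q - 2 * p - 2 * q + 4) • f x 0 0 := by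
  intro x p q hp hq
  obtain ⟨a, ha⟩ := hp
  obtain ⟨b, hb⟩ := hq
  have hp2 : p = 2 * a := by omega
  have hq2 : q = 2 * b := by omega
  subst hp2 hq2
  have Hq : ∀ p : ℤ, Even p →
      f x p (2 * b) = f x p 0 + (b : ℂ) • (f x p 2 - f x p 0) := fun p hp =>
    aux_lin (f x p) (fun q q' hq hq' => h1 x p q q' hp hq hq') b
  have Hp0 : f x (2 * a) 0 = f x 0 0 + (a : ℂ) • (f x 2 0 - f x 0 0) :=
    aux_lin (fun p => f x p 0)
      (fun p p' hp hp' => h2 x p p' 0 hp hp' ⟨0, rfl⟩) a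
  have Hp2 : f x (2 * a) 2 = f x 0 2 + (a : ℂ) • (f x 2 2 - f x 0 2) :=
    aux_lin (fun p => f x p 2)
      (fun p p' hp hp' => h2 x p p' 2 hp hp' ⟨1, rfl⟩) a
  rw [Hq (2 * a) ⟨a, by ring⟩, Hp0, Hp2]
  push_cast
  match_scalars <;> ring
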